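/- Suppose G and G' are locally compact, rectifiably connected noncomplete metric spaces, f: G → G' is an M-quasihyperbolic homeomorphism, and γ is a (λ,μ)-quasigeodesic in G with respect to the quasihyperbolic metric. Then the image γ' = f(γ) is a (ν,h)-solid arc in G', with ν = M²(λ+μ) and h = M(λ+μ). -/

import Mathlib

open Set Metric

noncomputable section

variable {D : Type*} [MetricSpace D]

/-- Distance from a point to the metric boundary `∂D = D̄ \ D`. -/
def dB (x : D) : ℝ :=
  Metric.infDist (x : UniformSpace.Completion D)
    ((Set.range ((↑) : D → UniformSpace.Completion D))ᶜ)

/-- A rectifiable curve from `x` to `y`, given in (1-Lipschitz) arclength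
parametrization on `[0, L]`; `L` is its length. -/
structure Curve (D : Type*) [MetricSpace D] (x y : D) where
  L : ℝ
  hL : 0 ≤ L
  γ : ℝ → D
  lip : LipschitzOnWith 1 γ (Set.Icc 0 L)
  h0 : γ 0 = x
  h1 : γ L = y

/-- Quasihyperbolic length of the subarc with parameters in `[s,t]`. -/
def Curve.qhLenOn {x y : D} (c : Curve D x y) (s t : ℝ) : ℝ :=
  ∫ u in s..t, 1 / dB (c.γ u)

/-- Quasihyperbolic length of a curve. -/
def Curve.qhLen {x y : D} (c : Curve D x y) : ℝ := c.qhLenOn 0 c.L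

/-- The quasihyperbolic distance: infimum of quasihyperbolic lengths of curves. -/
def qhDist (x y : D) : ℝ := sInf {r : ℝ | ∃ c : Curve D x y, r = c.qhLen}

/-- Every pair of points is joined by a rectifiable curve. -/
def RectConnected (D : Type*) [MetricSpace D] : Prop :=
  ∀ x y : D, Nonempty (Curve D x y)

/-- A length space: distance is the infimum of lengths of joining curves. -/
def IsLengthSpace (D : Type*) [MetricSpace D] : Prop :=
  ∀ x y : D, ∀ ε > 0, ∃ c : Curve D x y, c.L ≤ dist x y + ε

/-- A quasihyperbolic geodesic. -/
def Curve.IsQHGeodesic {x y : D} (c : Curve D x y) : Prop :=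
  ∀ s t : ℝ, s ∈ Set.Icc 0 c.L → t ∈ Set.Icc 0 c.L → s ≤ t →
    c.qhLenOn s t = qhDist (c.γ s) (c.γ t)

/-- An `a`-cone arc: `min{ℓ(α[x,z]), ℓ(α[z,y])} ≤ a·d_D(z)` for all `z` on the arc. -/
def Curve.IsConeArc {x y : D} (c : Curve D x y) (a : ℝ) : Prop :=
  ∀ t ∈ Set.Icc 0 c.L, min t (c.L - t) ≤ a * dB (c.γ t)

/-- A `(λ,μ)`-quasigeodesic with respect to the quasihyperbolic metric. -/
def Curve.IsQuasigeodesic {x y : D} (c : Curve D x y) (lam mu : ℝ) : Prop :=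
  ∀ s t : ℝ, s ∈ Set.Icc 0 c.L → t ∈ Set.Icc 0 c.L → s ≤ t →
    c.qhLenOn s t ≤ lam * qhDist (c.γ s) (c.γ t) + mu

/-- An `a`-John space. -/
def IsJohn (D : Type*) [MetricSpace D] (a : ℝ) : Prop :=
  ∀ x y : D, ∃ c : Curve D x y, c.IsConeArc a

/-- A `c`-uniform space. -/
def IsUniform (D : Type*) [MetricSpace D] (c : ℝ) : Prop :=
  ∀ x y : D, ∃ α : Curve D x y, α.L ≤ c * dist x y ∧ α.IsConeArc c

/-- Gromov product with respect to the quasihyperbolic metric. -/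
def gromovProd (x y w : D) : ℝ := (qhDist x w + qhDist y w - qhDist x y) / 2

/-- `(D,k)` is Gromov `δ`-hyperbolic (four-point condition). -/
def QHHyperbolic (D : Type*) [MetricSpace D] (δ : ℝ) : Prop :=
  ∀ x y z w : D, min (gromovProd x y w) (gromovProd y z w) - δ ≤ gromovProd x z w

/-- `(D,k)` is `K`-roughly starlike with respect to `w`. -/
def RoughlyStarlike (D : Type*) [MetricSpace D] (K : ℝ) (w : D) : Prop :=
  ∀ x : D, ∃ γ : ℝ → D, γ 0 = w ∧
    (∀ s t : ℝ, 0 ≤ s → 0 ≤ t → qhDist (γ s) (γ t) = |s - t|) ∧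
    ∃ t : ℝ, 0 ≤ t ∧ qhDist x (γ t) ≤ K

/-- The `h`-coarse quasihyperbolic length of the part of the curve `β` with
parameters in `[s,t]`. -/
def coarseLen {E : Type*} [MetricSpace E] (β : ℝ → E) (s t h : ℝ) : ℝ :=
  sSup {r : ℝ | ∃ n : ℕ, ∃ u : Fin (n + 1) → ℝ, Monotone u ∧
    (∀ i, u i ∈ Set.Icc s t) ∧
    (∀ i : Fin n, h ≤ qhDist (β (u i.castSucc)) (β (u i.succ))) ∧
    r = ∑ i : Fin n, qhDist (β (u i.castSucc)) (β (u i.succ))}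

/-- `λ`-annular quasiconvexity. -/
def AnnularQuasiconvex (X : Type*) [MetricSpace X] (lam : ℝ) : Prop :=
  ∀ (x : X) (r r' : ℝ), 0 < r' → r' < r →
    ∀ y z : X, y ∈ Metric.ball x r \ Metric.ball x r' →
      z ∈ Metric.ball x r \ Metric.ball x r' →
      ∃ c : Curve X y z, c.L ≤ lam * dist y z ∧
        ∀ t ∈ Set.Icc 0 c.L, c.γ t ∈ Metric.ball x (lam * r) \ Metric.ball x (r' / lam)

end

noncomputable section AuxLemmas

open UniformSpace intervalIntegral MeasureTheory

variable {D : Type*} [MetricSpace D]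

lemma my_dB_nonneg (x : D) : 0 ≤ dB x := Metric.infDist_nonneg

lemma my_dB_pos [LocallyCompactSpace D] (hnc : ¬ CompleteSpace D) (x : D) : 0 < dB x := by
  have hne : ((Set.range ((↑) : D → Completion D))ᶜ).Nonempty := by
    rw [Set.nonempty_compl]
    intro h
    apply hnc
    rw [completeSpace_iff_isComplete_range
      (UniformSpace.Completion.coe_isometry (α := D)).isUniformInducing, h]
    exact complete_univ
  obtain ⟨K, hKc, hKn⟩ := exists_compact_mem_nhds x
  obtain ⟨r, hr, hball⟩ := Metric.nhds_basis_closedBall.mem_iff.mp hKn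
  have hcb : IsCompact (Metric.closedBall x r) :=
    hKc.of_isClosed_subset Metric.isClosed_closedBall hball
  have himg : IsCompact (((↑) : D → Completion D) '' Metric.closedBall x r) :=
    hcb.image (UniformSpace.Completion.continuous_coe D)
  have hsub : Metric.ball (↑x : Completion D) r ⊆ Set.range ((↑) : D → Completion D) := by
    intro z hz
    have hz' : dist z (↑x : Completion D) < r := Metric.mem_ball.mp hz
    have hzc : z ∈ closure (((↑) : D → Completion D) '' Metric.closedBall x r) := by
      rw [Metric.mem_closure_iff]
      intro ε hε
      have hzmem : z ∈ closure (Set.range ((↑) : D → Completion D)) := by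
        rw [(UniformSpace.Completion.denseRange_coe (α := D)).closure_eq]
        exact Set.mem_univ z
      rw [Metric.mem_closure_iff] at hzmem
      obtain ⟨w, ⟨y, rfl⟩, hw⟩ := hzmem (min ε (r - dist z (↑x : Completion D)))
        (lt_min hε (by linarith))
      refine ⟨↑y, ⟨y, ?_, rfl⟩, hw.trans_le (min_le_left _ _)⟩
      rw [Metric.mem_closedBall, ← UniformSpace.Completion.dist_eq]
      have h1 : dist (↑y : Completion D) z < r - dist z ↑x := by
        rw [dist_comm]; exact hw.trans_le (min_le_right _ _)
      have h2 := dist_triangle (↑y : Completion D) z (↑x : Completion D)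
      linarith
    rw [himg.isClosed.closure_eq] at hzc
    exact Set.image_subset_range _ _ hzc
  rw [dB]
  by_contra hle
  push_neg at hle
  obtain ⟨w, hw, hdw⟩ := (Metric.infDist_lt_iff hne).mp (lt_of_le_of_lt hle hr)
  exact hw (hsub (Metric.mem_ball'.mpr hdw))

lemma my_dB_cont : Continuous (dB : D → ℝ) :=
  (Metric.continuous_infDist_pt _).comp (UniformSpace.Completion.continuous_coe D)

lemma my_integrand_contOn [LocallyCompactSpace D] (hnc : ¬ CompleteSpace D)
    {x y : D} (c : Curve D x y) :
    ContinuousOn (fun u => 1 / dB (c.γ u)) (Set.Icc 0 c.L) := by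
  have h1 : ContinuousOn c.γ (Set.Icc 0 c.L) := c.lip.continuousOn
  exact continuousOn_const.div (my_dB_cont.comp_continuousOn h1)
    (fun u _ => (my_dB_pos hnc _).ne')

lemma my_qhLen_nonneg {x y : D} (c : Curve D x y) : 0 ≤ c.qhLen :=
  intervalIntegral.integral_nonneg c.hL
    (fun u _ => one_div_nonneg.mpr (my_dB_nonneg _))

lemma my_qhDist_nonneg (hrc : RectConnected D) (x y : D) : 0 ≤ qhDist x y := by
  obtain ⟨c⟩ := hrc x y
  refine le_csInf ⟨_, c, rfl⟩ ?_
  rintro r ⟨c', rfl⟩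
  exact my_qhLen_nonneg c'

lemma my_qhDist_le_qhLenOn {x y : D} (c : Curve D x y) {s t : ℝ}
    (hs : s ∈ Set.Icc 0 c.L) (ht : t ∈ Set.Icc 0 c.L) (hst : s ≤ t) :
    qhDist (c.γ s) (c.γ t) ≤ c.qhLenOn s t := by
  have hsub : ∀ u ∈ Set.Icc (0:ℝ) (t - s), u + s ∈ Set.Icc 0 c.L := by
    intro u hu
    exact ⟨by linarith [hu.1, hs.1], by linarith [hu.2, ht.2]⟩
  set c' : Curve D (c.γ s) (c.γ t) :=
    { L := t - s
      hL := by linarith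
      γ := fun u => c.γ (u + s)
      lip := by
        intro u hu v hv
        have := c.lip (hsub u hu) (hsub v hv)
        simpa [edist_dist, dist_add_right] using this
      h0 := by simp
      h1 := by simp } with hc'
  have hlen : c'.qhLen = c.qhLenOn s t := by
    show c'.qhLenOn 0 c'.L = c.qhLenOn s t
    unfold Curve.qhLenOn
    have : (∫ u in (0:ℝ)..(t - s), 1 / dB (c.γ (u + s))) =
        ∫ u in (0 + s)..(t - s + s), 1 / dB (c.γ u) :=
      intervalIntegral.integral_comp_add_right (fun u => 1 / dB (c.γ u)) s
    simpa using this
  calc qhDist (c.γ s) (c.γ t) ≤ c'.qhLen := by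
        apply csInf_le
        · exact ⟨0, by rintro r ⟨c'', rfl⟩; exact my_qhLen_nonneg c''⟩
        · exact ⟨c', rfl⟩
    _ = c.qhLenOn s t := hlen

lemma my_qhLenOn_mono [LocallyCompactSpace D] (hnc : ¬ CompleteSpace D)
    {x y : D} (c : Curve D x y) {s t s' t' : ℝ}
    (hs : s ∈ Set.Icc 0 c.L) (ht : t ∈ Set.Icc 0 c.L)
    (hss' : s ≤ s') (hs't' : s' ≤ t') (ht't : t' ≤ t) :
    c.qhLenOn s' t' ≤ c.qhLenOn s t := by
  unfold Curve.qhLenOn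
  apply intervalIntegral.integral_mono_interval hss' hs't' ht't
  · filter_upwards with u
    exact one_div_nonneg.mpr (my_dB_nonneg _)
  · apply ContinuousOn.intervalIntegrable
    apply (my_integrand_contOn hnc c).mono
    rw [Set.uIcc_of_le (hss'.trans (hs't'.trans ht't))]
    exact Set.Icc_subset_Icc hs.1 ht.2

end AuxLemmas

/-- an `M`-QH homeomorphism maps a `(λ,μ)`-quasigeodesic to a
`(ν,h)`-solid arc with `ν = M²(λ+μ)`, `h = M(λ+μ)`. -/
theorem stmt7 {G G' : Type*} [MetricSpace G] [MetricSpace G']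
    [LocallyCompactSpace G] [LocallyCompactSpace G']
    (hrc : RectConnected G) (hrc' : RectConnected G')
    (hnc : ¬ CompleteSpace G) (hnc' : ¬ CompleteSpace G')
    (f : G ≃ₜ G') (M lam mu : ℝ) (hM : 1 ≤ M) (hlam : 1 ≤ lam) (hmu : 0 ≤ mu)
    (hqh : ∀ u v : G, qhDist u v / M ≤ qhDist (f u) (f v) ∧
      qhDist (f u) (f v) ≤ M * qhDist u v)
    (x y : G) (γ : Curve G x y) (hγ : γ.IsQuasigeodesic lam mu) :
    ∀ s t : ℝ, s ∈ Set.Icc 0 γ.L → t ∈ Set.Icc 0 γ.L → s ≤ t →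
      coarseLen (fun u => f (γ.γ u)) s t (M * (lam + mu)) ≤
        M ^ 2 * (lam + mu) * qhDist (f (γ.γ s)) (f (γ.γ t)) := by
  intro s t hs ht hst
  have hMpos : 0 < M := lt_of_lt_of_le one_pos hM
  have hlm : (1:ℝ) ≤ lam + mu := by linarith
  set k' := qhDist (f (γ.γ s)) (f (γ.γ t)) with hk'def
  have hk'0 : 0 ≤ k' := my_qhDist_nonneg hrc' _ _
  have hRHS0 : 0 ≤ M ^ 2 * (lam + mu) * k' := by positivity
  apply Real.sSup_le _ hRHS0
  rintro r ⟨n, u, hmono, hmem, hcoarse, rfl⟩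
  rcases Nat.eq_zero_or_pos n with hn | hn
  · subst hn; simpa using hRHS0
  · set k := qhDist (γ.γ s) (γ.γ t) with hkdef
    have hk0 : 0 ≤ k := my_qhDist_nonneg hrc _ _
    have hkk' : k ≤ M * k' := by
      have := (hqh (γ.γ s) (γ.γ t)).1
      rw [div_le_iff₀ hMpos] at this
      calc k ≤ k' * M := this
        _ = M * k' := mul_comm _ _
    have hmemL : ∀ i, u i ∈ Set.Icc 0 γ.L := by
      intro i
      exact ⟨hs.1.trans (hmem i).1, (hmem i).2.trans ht.2⟩
    -- each gap in G is at least lam + mu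
    have hterm : ∀ i : Fin n, lam + mu ≤ qhDist (γ.γ (u i.castSucc)) (γ.γ (u i.succ)) := by
      intro i
      have h1 := hcoarse i
      have h2 := (hqh (γ.γ (u i.castSucc)) (γ.γ (u i.succ))).2
      simp only at h1
      nlinarith
    set S := ∑ i : Fin n, qhDist (γ.γ (u i.castSucc)) (γ.γ (u i.succ)) with hSdef
    -- the image sum is at most M * S
    have hSf : ∑ i : Fin n, qhDist ((fun v => f (γ.γ v)) (u i.castSucc))
        ((fun v => f (γ.γ v)) (u i.succ)) ≤ M * S := by
      rw [hSdef, Finset.mul_sum]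
      exact Finset.sum_le_sum fun i _ => (hqh _ _).2
    -- lower bound on S
    have hSlow : lam + mu ≤ S := by
      calc lam + mu = (1 : ℕ) * (lam + mu) := by simp
        _ ≤ (n : ℝ) * (lam + mu) := by
            apply mul_le_mul_of_nonneg_right _ (by linarith)
            exact_mod_cast hn
        _ = ∑ _i : Fin n, (lam + mu) := by
            rw [Finset.sum_const, Finset.card_univ, Fintype.card_fin, nsmul_eq_mul]
        _ ≤ S := Finset.sum_le_sum fun i _ => hterm i
    -- telescoping: S ≤ qhLenOn s t
    set a : ℕ → ℝ := fun j => u ⟨min j n, Nat.lt_succ_of_le (min_le_right j n)⟩ with hadef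
    have hamono : Monotone a := by
      intro i j hij
      exact hmono (by simpa [Fin.le_def] using min_le_min hij le_rfl)
    have haIcc : ∀ j, a j ∈ Set.Icc 0 γ.L := fun j => hmemL _
    have hintg : ∀ j, j < n → IntervalIntegrable (fun v => 1 / dB (γ.γ v))
        MeasureTheory.volume (a j) (a (j + 1)) := by
      intro j _
      apply ContinuousOn.intervalIntegrable
      apply (my_integrand_contOn hnc γ).mono
      rw [Set.uIcc_of_le (hamono (Nat.le_succ j))]
      exact Set.Icc_subset_Icc (haIcc j).1 (haIcc (j + 1)).2
    have htel : ∑ i ∈ Finset.range n, γ.qhLenOn (a i) (a (i + 1)) = γ.qhLenOn (a 0) (a n) :=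
      intervalIntegral.sum_integral_adjacent_intervals hintg
    have hST : S ≤ γ.qhLenOn s t := by
      have h1 : S ≤ ∑ i : Fin n, γ.qhLenOn (u i.castSucc) (u i.succ) := by
        apply Finset.sum_le_sum
        intro i _
        exact my_qhDist_le_qhLenOn γ (hmemL _) (hmemL _)
          (hmono (Fin.castSucc_lt_succ (i := i)).le)
      have key1 : ∀ i : Fin n, a (i : ℕ) = u i.castSucc := by
        intro i
        show u _ = u _
        congr 1
        refine Fin.ext ?_
        rw [Fin.coe_castSucc]
        exact Nat.min_eq_left i.isLt.le
      have key2 : ∀ i : Fin n, a ((i : ℕ) + 1) = u i.succ := by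
        intro i
        show u _ = u _
        congr 1
        refine Fin.ext ?_
        rw [Fin.val_succ]
        exact Nat.min_eq_left i.isLt
      have h2 : ∑ i : Fin n, γ.qhLenOn (u i.castSucc) (u i.succ) =
          ∑ i ∈ Finset.range n, γ.qhLenOn (a i) (a (i + 1)) := by
        rw [← Fin.sum_univ_eq_sum_range (fun j => γ.qhLenOn (a j) (a (j + 1)))]
        exact Finset.sum_congr rfl fun i _ => by rw [key1 i, key2 i]
      have h3 : γ.qhLenOn (a 0) (a n) ≤ γ.qhLenOn s t := by
        apply my_qhLenOn_mono hnc γ hs ht (hmem _).1 (hamono (Nat.zero_le n)) (hmem _).2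
      calc S ≤ ∑ i : Fin n, γ.qhLenOn (u i.castSucc) (u i.succ) := h1
        _ = ∑ i ∈ Finset.range n, γ.qhLenOn (a i) (a (i + 1)) := h2
        _ = γ.qhLenOn (a 0) (a n) := htel
        _ ≤ γ.qhLenOn s t := h3
    have hqg : γ.qhLenOn s t ≤ lam * k + mu := hγ s t hs ht hst
    have hSk : S ≤ lam * k + mu := hST.trans hqg
    have hlampos : (0:ℝ) < lam := lt_of_lt_of_le one_pos hlam
    have hk1 : 1 ≤ k := by
      have h' : lam + mu ≤ lam * k + mu := hSlow.trans hSk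
      have h'' : lam ≤ lam * k := by linarith
      exact (le_mul_iff_one_le_right hlampos).mp h''
    calc ∑ i : Fin n, qhDist ((fun v => f (γ.γ v)) (u i.castSucc))
          ((fun v => f (γ.γ v)) (u i.succ)) ≤ M * S := hSf
      _ ≤ M * (lam * k + mu) := mul_le_mul_of_nonneg_left hSk hMpos.le
      _ ≤ M * ((lam + mu) * k) := by nlinarith [mul_nonneg hmu (sub_nonneg.mpr hk1)]
      _ ≤ M * ((lam + mu) * (M * k')) := by
          apply mul_le_mul_of_nonneg_left _ hMpos.le
          exact mul_le_mul_of_nonneg_left hkk' (by linarith)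
      _ = M ^ 2 * (lam + mu) * k' := by ring
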